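/- Let D ≥ 1 and for a ∈ F₂ let ρ_a^0, ρ_a^1 be density matrices on ℂ^D. Let Δ = max_{a ∈ {0,1}} Σ_{λ} |λ|, the maximum over a of the sum of the absolute values of the eigenvalues (with multiplicity) of the Hermitian matrix ρ_a^0 − ρ_a^1. Fix integers 1 ≤ m ≤ N and a string a ∈ F₂^N, and let {F_{g′}}_{g′ ∈ F₂^m} be a family of positive semidefinite Hermitian matrices on (ℂ^D)^{⊗N} with Σ_{g′ ∈ F₂^m} F_{g′} = 1. Then 2^{−N} · Σ_{g ∈ F₂^N} Tr( F_{(g[1],…,g[m])} · ⊗_{k=1}^N ρ_{a[k]}^{g[k]} ) ≤ (1/2 + Δ/4)^m. -/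

import Mathlib

open Matrix
open scoped ComplexOrder

/-- The `N`-fold Kronecker/tensor product `⊗_{k=1}^N M_k`, as a matrix acting on
`(ℂ^D)^{⊗N}` (indexed by functions `Fin N → Fin D`). -/
noncomputable def tpow {D N : ℕ} (M : Fin N → Matrix (Fin D) (Fin D) ℂ) :
    Matrix (Fin N → Fin D) (Fin N → Fin D) ℂ :=
  Matrix.of fun x y => ∏ i, M i (x i) (y i)

namespace Stmt13Aux

variable {D N : ℕ}

lemma tpow_mul (A B : Fin N → Matrix (Fin D) (Fin D) ℂ) :
    tpow (fun k => A k * B k) = tpow A * tpow B := by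
  ext x y
  simp only [tpow, Matrix.mul_apply, Matrix.of_apply]
  rw [Fintype.prod_sum (fun k j => A k (x k) j * B k j (y k))]
  exact Finset.sum_congr rfl fun z _ => by rw [Finset.prod_mul_distrib]

lemma tpow_conjTranspose (A : Fin N → Matrix (Fin D) (Fin D) ℂ) :
    tpow (fun k => (A k)ᴴ) = (tpow A)ᴴ := by
  ext x y
  simp [tpow, Matrix.conjTranspose_apply, map_prod]

lemma tpow_diagonal (d : Fin N → Fin D → ℂ) :
    tpow (fun k => diagonal (d k)) = diagonal (fun x => ∏ k, d k (x k)) := by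
  ext x y
  by_cases h : x = y
  · subst h; simp [tpow, diagonal_apply_eq]
  · rw [tpow, Matrix.of_apply, diagonal_apply_ne _ h]
    obtain ⟨k, hk⟩ := Function.ne_iff.mp h
    exact Finset.prod_eq_zero (Finset.mem_univ k) (diagonal_apply_ne _ hk)

lemma tpow_one : tpow (fun _ : Fin N => (1 : Matrix (Fin D) (Fin D) ℂ)) = 1 := by
  ext x y
  by_cases h : x = y
  · subst h; simp [tpow, Matrix.one_apply]
  · rw [tpow, Matrix.of_apply, Matrix.one_apply_ne h]
    obtain ⟨k, hk⟩ := Function.ne_iff.mp h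
    exact Finset.prod_eq_zero (Finset.mem_univ k) (Matrix.one_apply_ne hk)

lemma psd_diag_re_nonneg {n : Type*} [Fintype n] [DecidableEq n]
    {M : Matrix n n ℂ} (hM : M.PosSemidef) (x : n) : 0 ≤ (M x x).re := by
  have := hM.re_dotProduct_nonneg (Pi.single x 1)
  simpa [dotProduct, Matrix.mulVec, Pi.single_apply, Finset.sum_ite_eq] using this

lemma eig_congr {n : Type*} [Fintype n] [DecidableEq n]
    {A B : Matrix n n ℂ} (h : A = B) (hA : A.IsHermitian) (hB : B.IsHermitian) :
    hA.eigenvalues = hB.eigenvalues := by subst h; rfl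

lemma trace_eq_sum_eig {n : Type*} [Fintype n] [DecidableEq n]
    {A : Matrix n n ℂ} (hA : A.IsHermitian) :
    A.trace = ((∑ i, hA.eigenvalues i : ℝ) : ℂ) := by
  conv_lhs => rw [hA.spectral_theorem]
  rw [Unitary.conjStarAlgAut_apply, Matrix.trace_mul_cycle]
  have : (star (hA.eigenvectorUnitary : Matrix n n ℂ)) * (hA.eigenvectorUnitary : Matrix n n ℂ) = 1 :=
    Matrix.mem_unitaryGroup_iff'.mp hA.eigenvectorUnitary.2
  rw [this, Matrix.one_mul, Matrix.trace_diagonal]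
  push_cast
  rfl

lemma abs_eig_sum_of_psd {n : Type*} [Fintype n] [DecidableEq n]
    {A : Matrix n n ℂ} (hA : A.PosSemidef) (htr : A.trace = 1) :
    ∑ i, |hA.1.eigenvalues i| = 1 := by
  have h1 : ∑ i, hA.1.eigenvalues i = 1 := by
    have := trace_eq_sum_eig hA.1
    rw [htr] at this
    exact_mod_cast this.symm
  rw [← h1]
  exact Finset.sum_congr rfl fun i _ => abs_of_nonneg (hA.eigenvalues_nonneg i)

/-- The key trace-duality bound. -/
lemma key {ι : Type*} [Fintype ι] [Nonempty ι]
    (M : Fin N → Matrix (Fin D) (Fin D) ℂ) (hM : ∀ k, (M k).IsHermitian)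
    (F : ι → Matrix (Fin N → Fin D) (Fin N → Fin D) ℂ)
    (hF : ∀ i, (F i).PosSemidef) (hFsum : ∑ i, F i = 1)
    (χ : ι → ℝ) (C : ℝ) (hχ : ∀ i, |χ i| ≤ C) :
    ∑ i, χ i * ((F i * tpow M).trace).re ≤ C * ∏ k, ∑ d, |(hM k).eigenvalues d| := by
  classical
  set Umat : Fin N → Matrix (Fin D) (Fin D) ℂ := fun k => ((hM k).eigenvectorUnitary : Matrix (Fin D) (Fin D) ℂ) with hUmat
  set Ut : Matrix (Fin N → Fin D) (Fin N → Fin D) ℂ := tpow Umat with hUt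
  have hUunit : ∀ k, (Umat k)ᴴ * Umat k = 1 := by
    intro k
    have := Matrix.mem_unitaryGroup_iff'.mp (hM k).eigenvectorUnitary.2
    simpa [Matrix.star_eq_conjTranspose] using this
  have hUtU : Utᴴ * Ut = 1 := by
    rw [hUt, ← tpow_conjTranspose, ← tpow_mul]
    simp only [hUunit]
    exact tpow_one
  set dfun : (Fin N → Fin D) → ℝ := fun x => ∏ k, (hM k).eigenvalues (x k) with hdfun
  have hd : (fun x : Fin N → Fin D => ∏ k, (RCLike.ofReal ∘ (hM k).eigenvalues) (x k))
      = fun x => ((dfun x : ℝ) : ℂ) := by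
    funext x
    simp only [hdfun, Function.comp]
    push_cast
    rfl
  have hT : tpow M = Ut * diagonal (fun x => ((dfun x : ℝ) : ℂ)) * Utᴴ := by
    have h1 : M = fun k => Umat k * (diagonal (RCLike.ofReal ∘ (hM k).eigenvalues) * (Umat k)ᴴ) := by
      funext k
      rw [← Matrix.mul_assoc]
      exact (hM k).spectral_theorem
    calc tpow M = tpow (fun k => Umat k * (diagonal (RCLike.ofReal ∘ (hM k).eigenvalues) * (Umat k)ᴴ)) := by
          rw [← h1]
      _ = Ut * (tpow (fun k => diagonal (RCLike.ofReal ∘ (hM k).eigenvalues)) * tpow (fun k => (Umat k)ᴴ)) := by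
          rw [← tpow_mul, ← tpow_mul]
      _ = Ut * diagonal (fun x => ((dfun x : ℝ) : ℂ)) * Utᴴ := by
          rw [tpow_diagonal, hd, tpow_conjTranspose, Matrix.mul_assoc]
  have trace_mul_diag : ∀ (G : Matrix (Fin N → Fin D) (Fin N → Fin D) ℂ) (d : (Fin N → Fin D) → ℂ),
      (G * diagonal d).trace = ∑ x, G x x * d x := by
    intro G d
    rw [Matrix.trace]
    exact Finset.sum_congr rfl fun x _ => by rw [Matrix.diag_apply, Matrix.mul_diagonal]
  -- rewrite each trace
  have htr : ∀ i, ((F i * tpow M).trace).re = ∑ x, ((Utᴴ * F i * Ut) x x).re * dfun x := by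
    intro i
    rw [hT]
    rw [show F i * (Ut * diagonal (fun x => ((dfun x : ℝ) : ℂ)) * Utᴴ)
        = ((F i * Ut) * diagonal (fun x => ((dfun x : ℝ) : ℂ))) * Utᴴ from by noncomm_ring,
      Matrix.trace_mul_comm,
      show Utᴴ * ((F i * Ut) * diagonal (fun x => ((dfun x : ℝ) : ℂ)))
        = (Utᴴ * F i * Ut) * diagonal (fun x => ((dfun x : ℝ) : ℂ)) from by noncomm_ring,
      trace_mul_diag, Complex.re_sum]
    refine Finset.sum_congr rfl fun x _ => ?_
    simp [Complex.mul_re]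
  have hG0 : ∀ i x, 0 ≤ ((Utᴴ * F i * Ut) x x).re := fun i x =>
    psd_diag_re_nonneg ((hF i).conjTranspose_mul_mul_same Ut) x
  have hGsum : ∀ x, ∑ i, ((Utᴴ * F i * Ut) x x).re = 1 := by
    intro x
    have h1 : ∑ i, Utᴴ * F i * Ut = 1 := by
      rw [← Finset.sum_mul, ← Finset.mul_sum, hFsum, Matrix.mul_one, hUtU]
    calc ∑ i, ((Utᴴ * F i * Ut) x x).re = (((∑ i, Utᴴ * F i * Ut)) x x).re := by
          rw [Matrix.sum_apply]; exact (Complex.re_sum _ _).symm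
      _ = 1 := by rw [h1]; simp [Matrix.one_apply]
  have hC0 : 0 ≤ C := le_trans (abs_nonneg _) (hχ (Classical.arbitrary ι))
  calc ∑ i, χ i * ((F i * tpow M).trace).re
      = ∑ i, ∑ x, χ i * ((Utᴴ * F i * Ut) x x).re * dfun x := by
        refine Finset.sum_congr rfl fun i _ => ?_
        rw [htr i, Finset.mul_sum]
        exact Finset.sum_congr rfl fun x _ => by ring
    _ = ∑ x, ∑ i, χ i * ((Utᴴ * F i * Ut) x x).re * dfun x := Finset.sum_comm
    _ = ∑ x, (∑ i, χ i * ((Utᴴ * F i * Ut) x x).re) * dfun x := by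
        refine Finset.sum_congr rfl fun x _ => ?_
        rw [Finset.sum_mul]
    _ ≤ ∑ x, C * |dfun x| := by
        refine Finset.sum_le_sum fun x _ => ?_
        have habs : |∑ i, χ i * ((Utᴴ * F i * Ut) x x).re| ≤ C := by
          calc |∑ i, χ i * ((Utᴴ * F i * Ut) x x).re|
              ≤ ∑ i, |χ i * ((Utᴴ * F i * Ut) x x).re| := Finset.abs_sum_le_sum_abs _ _
            _ ≤ ∑ i, C * ((Utᴴ * F i * Ut) x x).re := by
                refine Finset.sum_le_sum fun i _ => ?_
                rw [abs_mul, abs_of_nonneg (hG0 i x)]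
                exact mul_le_mul_of_nonneg_right (hχ i) (hG0 i x)
            _ = C := by rw [← Finset.mul_sum, hGsum x, mul_one]
        calc (∑ i, χ i * ((Utᴴ * F i * Ut) x x).re) * dfun x
            ≤ |(∑ i, χ i * ((Utᴴ * F i * Ut) x x).re) * dfun x| := le_abs_self _
          _ = |∑ i, χ i * ((Utᴴ * F i * Ut) x x).re| * |dfun x| := abs_mul _ _
          _ ≤ C * |dfun x| := mul_le_mul_of_nonneg_right habs (abs_nonneg _)
    _ = C * ∏ k, ∑ d, |(hM k).eigenvalues d| := by
        rw [← Finset.mul_sum]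
        congr 1
        rw [Fintype.prod_sum (fun k d => |(hM k).eigenvalues d|)]
        refine Finset.sum_congr rfl fun x _ => ?_
        rw [hdfun, Finset.abs_prod]

noncomputable def Mmat (ρ : ZMod 2 → ZMod 2 → Matrix (Fin D) (Fin D) ℂ) (a ε : ZMod 2) :
    Matrix (Fin D) (Fin D) ℂ :=
  if ε = 0 then ((2⁻¹ : ℝ) : ℂ) • (ρ a 0 + ρ a 1) else ρ a 0 - ρ a 1

noncomputable def cc (ε g : ZMod 2) : ℝ := if ε = 0 then 1 else (if g = 0 then 2⁻¹ else -2⁻¹)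

noncomputable def cb (ε : ZMod 2) : ℝ := if ε = 0 then 1 else 2⁻¹

lemma zmod2_cases : ∀ x : ZMod 2, x = 0 ∨ x = 1 := by decide

lemma zmod2_sum {M : Type*} [AddCommMonoid M] (f : ZMod 2 → M) : ∑ ε, f ε = f 0 + f 1 := by
  rw [show (Finset.univ : Finset (ZMod 2)) = {0, 1} from by decide]
  rw [Finset.sum_insert (by decide), Finset.sum_singleton]

lemma abs_cc (ε g : ZMod 2) : |cc ε g| = cb ε := by
  rcases zmod2_cases ε with h | h <;> rcases zmod2_cases g with h' | h' <;> subst h <;> subst h' <;>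
    simp [cc, cb, show (1 : ZMod 2) ≠ 0 from by decide]

lemma cb_nonneg (ε : ZMod 2) : 0 ≤ cb ε := by
  rw [← abs_cc ε 0]; exact abs_nonneg _

lemma rho_decomp (ρ : ZMod 2 → ZMod 2 → Matrix (Fin D) (Fin D) ℂ) (a g : ZMod 2) :
    ρ a g = ∑ ε : ZMod 2, ((cc ε g : ℝ) : ℂ) • Mmat ρ a ε := by
  rw [zmod2_sum]
  rcases zmod2_cases g with h | h <;> subst h <;> ext i j <;>
    simp [Mmat, cc, Matrix.add_apply, Matrix.sub_apply, Matrix.smul_apply,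
      show (1 : ZMod 2) ≠ 0 from by decide] <;> ring

lemma smul_psd {n : Type*} [Fintype n] [DecidableEq n] {A : Matrix n n ℂ}
    (hA : A.PosSemidef) {c : ℝ} (hc : 0 ≤ c) : (((c : ℝ) : ℂ) • A).PosSemidef := by
  constructor
  · have := hA.1
    unfold Matrix.IsHermitian at *
    rw [Matrix.conjTranspose_smul, this, Complex.star_def, Complex.conj_ofReal]
  · intro x
    exact (hA.smul (Complex.zero_le_real.mpr hc)).2 x

lemma Mmat_herm (ρ : ZMod 2 → ZMod 2 → Matrix (Fin D) (Fin D) ℂ)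
    (hρ : ∀ a g, (ρ a g).PosSemidef ∧ (ρ a g).trace = 1)
    (hH : ∀ a : ZMod 2, (ρ a 0 - ρ a 1).IsHermitian) (a ε : ZMod 2) :
    (Mmat ρ a ε).IsHermitian := by
  unfold Mmat
  split_ifs
  · exact (smul_psd (((hρ a 0).1.add (hρ a 1).1)) (by norm_num : (0:ℝ) ≤ 2⁻¹)).1
  · exact hH a

lemma Mmat_zero_psd (ρ : ZMod 2 → ZMod 2 → Matrix (Fin D) (Fin D) ℂ)
    (hρ : ∀ a g, (ρ a g).PosSemidef ∧ (ρ a g).trace = 1) (a : ZMod 2) :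
    (Mmat ρ a 0).PosSemidef ∧ (Mmat ρ a 0).trace = 1 := by
  constructor
  · unfold Mmat
    rw [if_pos rfl]
    exact smul_psd ((hρ a 0).1.add (hρ a 1).1) (by norm_num : (0:ℝ) ≤ 2⁻¹)
  · unfold Mmat
    rw [if_pos rfl, Matrix.trace_smul, Matrix.trace_add, (hρ a 0).2, (hρ a 1).2]
    norm_num

lemma delta_bound (ρ : ZMod 2 → ZMod 2 → Matrix (Fin D) (Fin D) ℂ)
    (hH : ∀ a : ZMod 2, (ρ a 0 - ρ a 1).IsHermitian) (b : ZMod 2) :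
    ∑ d, |(hH b).eigenvalues d|
      ≤ max (∑ i, |(hH 0).eigenvalues i|) (∑ i, |(hH 1).eigenvalues i|) := by
  rcases zmod2_cases b with h | h <;> subst h
  · exact le_max_left _ _
  · exact le_max_right _ _

end Stmt13Aux

section
open Stmt13Aux

/-- indistinguishability bound.  With `Δ` the maximum over `a ∈ {0,1}`
of the sum of the absolute values of the eigenvalues of `ρ_a^0 − ρ_a^1`, any POVM
`{F_{g′}}_{g′ ∈ F₂^m}` guessing the first `m` bits of a uniformly random `g ∈ F₂^N`
from the state `⊗_k ρ_{a[k]}^{g[k]}` succeeds with probability at most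
`(1/2 + Δ/4)^m`. -/
theorem stmt13 (D N m : ℕ) (hD : 1 ≤ D) (hm : 1 ≤ m) (hmN : m ≤ N)
    (ρ : ZMod 2 → ZMod 2 → Matrix (Fin D) (Fin D) ℂ)
    (hρ : ∀ a g, (ρ a g).PosSemidef ∧ (ρ a g).trace = 1)
    (hH : ∀ a : ZMod 2, (ρ a 0 - ρ a 1).IsHermitian)
    (Δ : ℝ)
    (hΔ : Δ = max (∑ i, |(hH 0).eigenvalues i|) (∑ i, |(hH 1).eigenvalues i|))
    (a : Fin N → ZMod 2)
    (Fm : (Fin m → ZMod 2) → Matrix (Fin N → Fin D) (Fin N → Fin D) ℂ)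
    (hFm : ∀ g', (Fm g').PosSemidef)
    (hFsum : ∑ g' : Fin m → ZMod 2, Fm g' = 1) :
    ((2:ℝ) ^ N)⁻¹ *
        ∑ g : Fin N → ZMod 2,
          ((Fm (fun i => g (Fin.castLE hmN i)) * tpow (fun k => ρ (a k) (g k))).trace).re
      ≤ (1/2 + Δ/4) ^ m := by
  classical
  have h' : m + (N - m) = N := Nat.add_sub_cancel' hmN
  set e : Fin m ⊕ Fin (N - m) ≃ Fin N := finSumFinEquiv.trans (finCongr h') with he
  set Q : ((Fin m → ZMod 2) × (Fin (N - m) → ZMod 2)) ≃ (Fin N → ZMod 2) :=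
    (Equiv.sumArrowEquivProdArrow _ _ _).symm.trans
      (Equiv.arrowCongr e (Equiv.refl (ZMod 2))) with hQ
  have hQapp : ∀ (u : Fin m → ZMod 2) (v : Fin (N - m) → ZMod 2) (k : Fin N),
      Q (u, v) k = Sum.elim u v (e.symm k) := by
    intro u v k
    simp [hQ, Equiv.arrowCongr, Equiv.sumArrowEquivProdArrow]
  have hecast : ∀ i : Fin m, e (Sum.inl i) = Fin.castLE hmN i := by
    intro i
    ext
    simp [he]
  have hhead : ∀ (u : Fin m → ZMod 2) (v : Fin (N - m) → ZMod 2) (i : Fin m),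
      Q (u, v) (Fin.castLE hmN i) = u i := by
    intro u v i
    rw [← hecast i, hQapp, Equiv.symm_apply_apply]
    rfl
  -- the elementary matrices
  set W : (Fin m → ZMod 2) → (Fin (N - m) → ZMod 2) → Fin N → Matrix (Fin D) (Fin D) ℂ :=
    fun E v k => Sum.elim (fun i => Mmat ρ (a k) (E i)) (fun j => ρ (a k) (v j)) (e.symm k)
      with hW
  have hWherm : ∀ E v k, (W E v k).IsHermitian := by
    intro E v k
    rw [hW]
    rcases h : e.symm k with i | j
    · simpa [h] using Mmat_herm ρ hρ hH (a k) (E i)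
    · simpa [h] using (hρ (a k) (v j)).1.1
  -- the expansion of the tensor product state
  have hexp : ∀ (u : Fin m → ZMod 2) (v : Fin (N - m) → ZMod 2),
      tpow (fun k => ρ (a k) (Sum.elim u v (e.symm k)))
        = ∑ E : Fin m → ZMod 2, ((∏ i, cc (E i) (u i) : ℝ) : ℂ) • tpow (W E v) := by
    intro u v
    ext x y
    have hL : tpow (fun k => ρ (a k) (Sum.elim u v (e.symm k))) x y
        = (∏ i, ρ (a (e (Sum.inl i))) (u i) (x (e (Sum.inl i))) (y (e (Sum.inl i))))
          * ∏ j, ρ (a (e (Sum.inr j))) (v j) (x (e (Sum.inr j))) (y (e (Sum.inr j))) := by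
      rw [tpow, Matrix.of_apply,
        ← Equiv.prod_comp e (fun k => ρ (a k) (Sum.elim u v (e.symm k)) (x k) (y k)),
        Fintype.prod_sum_type]
      simp
    have hfac : ∀ i : Fin m, ρ (a (e (Sum.inl i))) (u i) (x (e (Sum.inl i))) (y (e (Sum.inl i)))
        = ∑ ε : ZMod 2, ((cc ε (u i) : ℝ) : ℂ)
            * Mmat ρ (a (e (Sum.inl i))) ε (x (e (Sum.inl i))) (y (e (Sum.inl i))) := by
      intro i
      conv_lhs => rw [rho_decomp ρ (a (e (Sum.inl i))) (u i)]
      rw [Matrix.sum_apply]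
      exact Finset.sum_congr rfl fun ε _ => by rw [Matrix.smul_apply, smul_eq_mul]
    have hR : ∀ E : Fin m → ZMod 2, tpow (W E v) x y
        = (∏ i, Mmat ρ (a (e (Sum.inl i))) (E i) (x (e (Sum.inl i))) (y (e (Sum.inl i))))
          * ∏ j, ρ (a (e (Sum.inr j))) (v j) (x (e (Sum.inr j))) (y (e (Sum.inr j))) := by
      intro E
      rw [tpow, Matrix.of_apply,
        ← Equiv.prod_comp e (fun k => W E v k (x k) (y k)), Fintype.prod_sum_type]
      simp [hW]
    rw [hL, Matrix.sum_apply]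
    have hps := Fintype.prod_sum (fun (i : Fin m) (ε : ZMod 2) =>
      ((cc ε (u i) : ℝ) : ℂ)
        * Mmat ρ (a (e (Sum.inl i))) ε (x (e (Sum.inl i))) (y (e (Sum.inl i))))
    rw [show (∏ i, ρ (a (e (Sum.inl i))) (u i) (x (e (Sum.inl i))) (y (e (Sum.inl i))))
        = ∑ E : Fin m → ZMod 2, ∏ i, (((cc (E i) (u i) : ℝ) : ℂ)
            * Mmat ρ (a (e (Sum.inl i))) (E i) (x (e (Sum.inl i))) (y (e (Sum.inl i)))) from
      (Finset.prod_congr rfl fun i _ => hfac i).trans hps]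
    rw [Finset.sum_mul]
    refine Finset.sum_congr rfl fun E _ => ?_
    rw [Matrix.smul_apply, smul_eq_mul, hR E, Finset.prod_mul_distrib]
    push_cast
    ring
  -- the per-(E, v) eigenvalue-sum bound
  have hDnn : 0 ≤ Δ := by
    rw [hΔ]
    exact le_max_of_le_left (Finset.sum_nonneg fun i _ => abs_nonneg _)
  set bb : ZMod 2 → ℝ := fun ε => if ε = 0 then 1 else Δ with hbb
  have hbb0 : bb 0 = 1 := by simp [hbb]
  have hbb1 : bb 1 = Δ := by
    simp [hbb, show (1 : ZMod 2) ≠ 0 from by decide]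
  have hbnn : ∀ ε, 0 ≤ bb ε := by
    intro ε
    rcases zmod2_cases ε with h | h <;> rw [h]
    · rw [hbb0]; norm_num
    · rw [hbb1]; exact hDnn
  have heig : ∀ (E : Fin m → ZMod 2) (v : Fin (N - m) → ZMod 2),
      (∏ k, ∑ d, |(hWherm E v k).eigenvalues d|) ≤ ∏ i, bb (E i) := by
    intro E v
    have hsplit : (∏ k, ∑ d, |(hWherm E v k).eigenvalues d|)
        = ∏ s : Fin m ⊕ Fin (N - m), ∑ d, |(hWherm E v (e s)).eigenvalues d| :=
      (Equiv.prod_comp e (fun k => ∑ d, |(hWherm E v k).eigenvalues d|)).symm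
    rw [hsplit, Fintype.prod_sum_type]
    have htail : ∀ j : Fin (N - m),
        ∑ d, |(hWherm E v (e (Sum.inr j))).eigenvalues d| = 1 := by
      intro j
      have heq : W E v (e (Sum.inr j)) = ρ (a (e (Sum.inr j))) (v j) := by
        rw [hW]; simp
      rw [eig_congr heq (hWherm E v (e (Sum.inr j))) (hρ (a (e (Sum.inr j))) (v j)).1.1]
      exact abs_eig_sum_of_psd (hρ (a (e (Sum.inr j))) (v j)).1
        (hρ (a (e (Sum.inr j))) (v j)).2
    have hheadb : ∀ i : Fin m,
        ∑ d, |(hWherm E v (e (Sum.inl i))).eigenvalues d| ≤ bb (E i) := by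
      intro i
      have heq : W E v (e (Sum.inl i)) = Mmat ρ (a (e (Sum.inl i))) (E i) := by
        rw [hW]; simp
      rw [eig_congr heq (hWherm E v (e (Sum.inl i)))
        (Mmat_herm ρ hρ hH (a (e (Sum.inl i))) (E i))]
      rcases zmod2_cases (E i) with hE | hE
      · rw [hE, hbb0]
        have h0 := Mmat_zero_psd ρ hρ (a (e (Sum.inl i)))
        rw [eig_congr rfl (Mmat_herm ρ hρ hH (a (e (Sum.inl i))) 0) h0.1.1]
        exact le_of_eq (abs_eig_sum_of_psd h0.1 h0.2)
      · rw [hE, hbb1]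
        have heq1 : Mmat ρ (a (e (Sum.inl i))) 1
            = ρ (a (e (Sum.inl i))) 0 - ρ (a (e (Sum.inl i))) 1 := by
          rw [Mmat, if_neg (show (1 : ZMod 2) ≠ 0 from by decide)]
        rw [eig_congr heq1 (Mmat_herm ρ hρ hH (a (e (Sum.inl i))) 1)
          (hH (a (e (Sum.inl i)))), hΔ]
        exact delta_bound ρ hH (a (e (Sum.inl i)))
    calc (∏ i, ∑ d, |(hWherm E v (e (Sum.inl i))).eigenvalues d|)
          * ∏ j, ∑ d, |(hWherm E v (e (Sum.inr j))).eigenvalues d|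
        = (∏ i, ∑ d, |(hWherm E v (e (Sum.inl i))).eigenvalues d|) * 1 := by
          rw [Finset.prod_congr rfl fun j _ => htail j, Finset.prod_const_one]
      _ ≤ ∏ i, bb (E i) := by
          rw [mul_one]
          exact Finset.prod_le_prod (fun i _ => Finset.sum_nonneg fun d _ => abs_nonneg _)
            (fun i _ => hheadb i)
  -- trace expansion per (u, v)
  have htrace : ∀ (u : Fin m → ZMod 2) (v : Fin (N - m) → ZMod 2),
      ((Fm u * tpow (fun k => ρ (a k) (Sum.elim u v (e.symm k)))).trace).re
        = ∑ E : Fin m → ZMod 2,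
            (∏ i, cc (E i) (u i)) * ((Fm u * tpow (W E v)).trace).re := by
    intro u v
    rw [hexp u v, Matrix.mul_sum,
      show (∑ E : Fin m → ZMod 2, Fm u * (((∏ i, cc (E i) (u i) : ℝ) : ℂ) • tpow (W E v)))
        = ∑ E : Fin m → ZMod 2, ((∏ i, cc (E i) (u i) : ℝ) : ℂ) • (Fm u * tpow (W E v)) from
        Finset.sum_congr rfl fun E _ => Matrix.mul_smul _ _ _,
      Matrix.trace_sum, Complex.re_sum]
    refine Finset.sum_congr rfl fun E _ => ?_
    rw [Matrix.trace_smul, smul_eq_mul, Complex.re_ofReal_mul]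
  have hcb0 : cb 0 = 1 := by simp [cb]
  have hcb1 : cb 1 = 2⁻¹ := by simp [cb, show (1 : ZMod 2) ≠ 0 from by decide]
  -- the per-v bound
  have hkeyall : ∀ v : Fin (N - m) → ZMod 2,
      ∑ u : Fin m → ZMod 2,
        ((Fm u * tpow (fun k => ρ (a k) (Sum.elim u v (e.symm k)))).trace).re
      ≤ (1 + 2⁻¹ * Δ) ^ m := by
    intro v
    calc ∑ u : Fin m → ZMod 2,
        ((Fm u * tpow (fun k => ρ (a k) (Sum.elim u v (e.symm k)))).trace).re
        = ∑ u : Fin m → ZMod 2, ∑ E : Fin m → ZMod 2,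
            (∏ i, cc (E i) (u i)) * ((Fm u * tpow (W E v)).trace).re :=
          Finset.sum_congr rfl fun u _ => htrace u v
      _ = ∑ E : Fin m → ZMod 2, ∑ u : Fin m → ZMod 2,
            (∏ i, cc (E i) (u i)) * ((Fm u * tpow (W E v)).trace).re := Finset.sum_comm
      _ ≤ ∑ E : Fin m → ZMod 2,
            (∏ i, cb (E i)) * ∏ k, ∑ d, |(hWherm E v k).eigenvalues d| := by
          refine Finset.sum_le_sum fun E _ => ?_
          exact key (W E v) (hWherm E v) Fm hFm hFsum
            (fun u => ∏ i, cc (E i) (u i)) (∏ i, cb (E i))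
            (fun u => le_of_eq ((Finset.abs_prod _ _).trans
              (Finset.prod_congr rfl fun i _ => abs_cc (E i) (u i))))
      _ ≤ ∑ E : Fin m → ZMod 2, (∏ i, cb (E i)) * ∏ i, bb (E i) := by
          refine Finset.sum_le_sum fun E _ => ?_
          exact mul_le_mul_of_nonneg_left (heig E v)
            (Finset.prod_nonneg fun i _ => cb_nonneg (E i))
      _ = ∑ E : Fin m → ZMod 2, ∏ i, (cb (E i) * bb (E i)) :=
          Finset.sum_congr rfl fun E _ => (Finset.prod_mul_distrib).symm
      _ = ∏ i : Fin m, ∑ ε : ZMod 2, (cb ε * bb ε) :=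
          (Fintype.prod_sum (fun (i : Fin m) (ε : ZMod 2) => cb ε * bb ε)).symm
      _ = (1 + 2⁻¹ * Δ) ^ m := by
          rw [show (∏ i : Fin m, ∑ ε : ZMod 2, (cb ε * bb ε))
              = ∏ i : Fin m, (1 + 2⁻¹ * Δ) from Finset.prod_congr rfl fun i _ => by
            rw [zmod2_sum (fun ε => cb ε * bb ε), hcb0, hbb0, hcb1, hbb1]; ring]
          rw [Finset.prod_const, Finset.card_univ, Fintype.card_fin]
  -- reindex the sum over g
  have hreindex : ∑ g : Fin N → ZMod 2,
      ((Fm (fun i => g (Fin.castLE hmN i)) * tpow (fun k => ρ (a k) (g k))).trace).re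
      = ∑ v : Fin (N - m) → ZMod 2, ∑ u : Fin m → ZMod 2,
          ((Fm u * tpow (fun k => ρ (a k) (Sum.elim u v (e.symm k)))).trace).re := by
    rw [← Equiv.sum_comp Q (fun g =>
      ((Fm (fun i => g (Fin.castLE hmN i)) * tpow (fun k => ρ (a k) (g k))).trace).re),
      Fintype.sum_prod_type, Finset.sum_comm]
    refine Finset.sum_congr rfl fun v _ => Finset.sum_congr rfl fun u _ => ?_
    have harg1 : (fun i => Q (u, v) (Fin.castLE hmN i)) = u := funext (hhead u v)
    have harg2 : (fun k => ρ (a k) (Q (u, v) k))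
        = fun k => ρ (a k) (Sum.elim u v (e.symm k)) := funext fun k => by rw [hQapp]
    rw [harg1, harg2]
  rw [hreindex]
  calc ((2:ℝ) ^ N)⁻¹ * ∑ v : Fin (N - m) → ZMod 2, ∑ u : Fin m → ZMod 2,
        ((Fm u * tpow (fun k => ρ (a k) (Sum.elim u v (e.symm k)))).trace).re
      ≤ ((2:ℝ) ^ N)⁻¹ * ∑ v : Fin (N - m) → ZMod 2, (1 + 2⁻¹ * Δ) ^ m := by
        refine mul_le_mul_of_nonneg_left (Finset.sum_le_sum fun v _ => hkeyall v) ?_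
        positivity
    _ = (1/2 + Δ/4) ^ m := by
        rw [Finset.sum_const, Finset.card_univ,
          show Fintype.card (Fin (N - m) → ZMod 2) = 2 ^ (N - m) from by
            simp [Fintype.card_fun], nsmul_eq_mul]
        push_cast
        rw [show ((2:ℝ) ^ N) = 2 ^ m * 2 ^ (N - m) from by rw [← pow_add, h'],
          show (1/2 + Δ/4 : ℝ) = (1 + 2⁻¹ * Δ)/2 from by ring, div_pow]
        have h3 : ((2:ℝ) ^ m) ≠ 0 := by positivity
        have h2 : ((2:ℝ) ^ (N - m)) ≠ 0 := by positivity
        field_simp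

end
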